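/- For any integer n > 1 and any odd prime p, the p-adic valuation of gcd over 0 < k < n of C(2n, 2k) equals 1 if 2n = p^i + p^j for some integers 0 ≤ i ≤ j, and equals 0 otherwise. -/

import Mathlib

open Nat Finset

private lemma carry_iff {p N m t : ℕ} (hp : 1 < p) (hm : m ≤ N) :
    p ^ t ≤ m % p ^ t + (N - m) % p ^ t ↔ N % p ^ t < m % p ^ t := by
  have hpt : 0 < p ^ t := Nat.pow_pos (n := t) (by omega)
  have hsum : (m % p ^ t + (N - m) % p ^ t) % p ^ t = N % p ^ t := by
    rw [← Nat.add_mod, Nat.add_sub_cancel' hm]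
  set A := m % p ^ t with hA'
  set B := (N - m) % p ^ t with hB'
  set C := N % p ^ t with hC'
  have hA : A < p ^ t := Nat.mod_lt _ hpt
  have hB : B < p ^ t := Nat.mod_lt _ hpt
  have hC : C < p ^ t := Nat.mod_lt _ hpt
  rcases Nat.lt_or_ge (A + B) (p ^ t) with h | h
  · rw [Nat.mod_eq_of_lt h] at hsum; clear_value A B C; omega
  · have h2 : A + B - p ^ t < p ^ t := by omega
    rw [Nat.mod_eq_sub_mod h, Nat.mod_eq_of_lt h2] at hsum
    clear_value A B C; omega

private lemma val_eq {p N m : ℕ} (hp : p.Prime) (hm : m ≤ N) :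
    padicValNat p (N.choose m) =
      ((Finset.Ico 1 (Nat.log p N + 1)).filter fun t => N % p ^ t < m % p ^ t).card := by
  haveI : Fact p.Prime := ⟨hp⟩
  rw [padicValNat_choose hm (Nat.lt_succ_self _)]
  congr 1
  apply Finset.filter_congr
  intro t _
  exact carry_iff hp.one_lt hm

private lemma mem_of_carry {p N m t : ℕ} (hp : 1 < p) (hm : m ≤ N)
    (hc : N % p ^ t < m % p ^ t) : t ∈ Finset.Ico 1 (Nat.log p N + 1) := by
  have ht1 : 1 ≤ t := by
    rcases Nat.eq_zero_or_pos t with rfl | h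
    · simp [Nat.mod_one] at hc
    · exact h
  have hpN : p ^ t ≤ N := by
    by_contra h
    push_neg at h
    rw [Nat.mod_eq_of_lt (by omega : N < p ^ t),
        Nat.mod_eq_of_lt (by omega : m < p ^ t)] at hc
    omega
  have hN0 : N ≠ 0 := by
    have : 0 < p ^ t := Nat.pow_pos (n := t) (by omega)
    omega
  simp only [Finset.mem_Ico]
  exact ⟨ht1, Nat.lt_succ_of_le ((Nat.le_log_iff_pow_le hp hN0).mpr hpN)⟩

private lemma dvd_of_carry {p N m : ℕ} (hp : p.Prime) (hm : m ≤ N)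
    (h : ∃ t, N % p ^ t < m % p ^ t) : p ∣ N.choose m := by
  haveI : Fact p.Prime := ⟨hp⟩
  obtain ⟨t, ht⟩ := h
  have h1 : 1 ≤ padicValNat p (N.choose m) := by
    rw [val_eq hp hm]
    have : t ∈ (Finset.Ico 1 (Nat.log p N + 1)).filter fun t => N % p ^ t < m % p ^ t :=
      Finset.mem_filter.mpr ⟨mem_of_carry hp.one_lt hm ht, ht⟩
    exact Finset.card_pos.mpr ⟨t, this⟩
  have := (padicValNat_dvd_iff_le (Nat.choose_pos hm).ne').mpr h1
  simpa using this

private lemma not_dvd_of_no_carry {p N m : ℕ} (hp : p.Prime) (hm : m ≤ N)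
    (h : ∀ t, m % p ^ t ≤ N % p ^ t) : ¬ p ∣ N.choose m := by
  haveI : Fact p.Prime := ⟨hp⟩
  intro hdvd
  have h1 : 1 ≤ padicValNat p (N.choose m) :=
    one_le_padicValNat_of_dvd (Nat.choose_pos hm).ne' hdvd
  rw [val_eq hp hm] at h1
  have : ((Finset.Ico 1 (Nat.log p N + 1)).filter fun t => N % p ^ t < m % p ^ t) = ∅ :=
    Finset.filter_eq_empty_iff.mpr fun t _ => not_lt.mpr (h t)
  rw [this] at h1
  simp at h1

private lemma val_one_of_single_carry {p N m j : ℕ} (hp : p.Prime) (hm : m ≤ N)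
    (hj : ∀ t, N % p ^ t < m % p ^ t ↔ t = j) :
    padicValNat p (N.choose m) = 1 := by
  rw [val_eq hp hm]
  have hmem : j ∈ Finset.Ico 1 (Nat.log p N + 1) :=
    mem_of_carry hp.one_lt hm ((hj j).mpr rfl)
  have : ((Finset.Ico 1 (Nat.log p N + 1)).filter fun t => N % p ^ t < m % p ^ t) = {j} := by
    ext t
    simp only [Finset.mem_filter, Finset.mem_singleton]
    constructor
    · rintro ⟨-, h⟩; exact (hj t).mp h
    · rintro rfl; exact ⟨hmem, (hj _).mpr rfl⟩
  rw [this, Finset.card_singleton]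


-- digit extraction commutes with truncation
private lemma digit_of_mod {p N t s : ℕ} (hp : 1 < p) (hts : t < s) :
    N % p ^ s / p ^ t % p = N / p ^ t % p := by
  have h1 : p ^ s = p ^ t * p ^ (s - t) := by rw [← pow_add]; congr 1; omega
  rw [h1, Nat.mod_mul_right_div_self]
  exact Nat.mod_mod_of_dvd _ (dvd_pow_self p (by omega))

private lemma le_mod_of_digit_ne {p N t s : ℕ} (hp : 1 < p) (hts : t < s)
    (h : N / p ^ t % p ≠ 0) : p ^ t ≤ N % p ^ s := by
  have h2 : N % p ^ s / p ^ t % p ≠ 0 := by rw [digit_of_mod hp hts]; exact h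
  have h3 : N % p ^ s / p ^ t ≠ 0 := fun hz => h2 (by rw [hz]; simp)
  have h4 : 1 ≤ N % p ^ s / p ^ t := Nat.one_le_iff_ne_zero.mpr h3
  calc p ^ t = p ^ t * 1 := (mul_one _).symm
    _ ≤ p ^ t * (N % p ^ s / p ^ t) := Nat.mul_le_mul_left _ h4
    _ ≤ N % p ^ s := Nat.mul_div_le _ _ |>.trans_eq rfl |>.trans (le_refl _) |>.trans (le_refl _)

private lemma two_digits_le {p N t1 t2 s : ℕ} (hp : 1 < p) (h12 : t1 < t2) (h2s : t2 < s)
    (h1 : N / p ^ t1 % p ≠ 0) (h2 : N / p ^ t2 % p ≠ 0) :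
    p ^ t1 + p ^ t2 ≤ N % p ^ s := by
  set R := N % p ^ s with hR
  have hRm : R % p ^ t2 = N % p ^ t2 :=
    Nat.mod_mod_of_dvd _ (pow_dvd_pow p h2s.le)
  have ha : p ^ t1 ≤ N % p ^ t2 := le_mod_of_digit_ne hp h12 h1
  have hb : p ^ t2 ≤ R := le_mod_of_digit_ne hp h2s h2
  have hq : 1 ≤ R / p ^ t2 := (Nat.one_le_div_iff (Nat.pow_pos (by omega))).mpr hb
  have hdm : p ^ t2 * (R / p ^ t2) + R % p ^ t2 = R := Nat.div_add_mod _ _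
  have : p ^ t2 * 1 ≤ p ^ t2 * (R / p ^ t2) := Nat.mul_le_mul_left _ hq
  omega

private lemma pow_dvd_of_digits_zero {p N : ℕ} (hp : 1 < p) :
    ∀ t, (∀ u, u < t → N / p ^ u % p = 0) → p ^ t ∣ N := by
  intro t
  induction t with
  | zero => simp
  | succ t ih =>
    intro h
    have hdvd : p ^ t ∣ N := ih fun u hu => h u (by omega)
    have hd : p ∣ N / p ^ t := Nat.dvd_of_mod_eq_zero (h t (by omega))
    obtain ⟨c, hc⟩ := hd
    refine ⟨c, ?_⟩
    rw [pow_succ]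
    have h2 : N / p ^ t * p ^ t = N := Nat.div_mul_cancel hdvd
    calc N = N / p ^ t * p ^ t := h2.symm
      _ = p * c * p ^ t := by rw [hc]
      _ = p ^ t * p * c := by ring

private lemma leading_digit_ne {p N : ℕ} (hp : 1 < p) (hN : N ≠ 0) :
    N / p ^ Nat.log p N % p ≠ 0 := by
  have h1 := Nat.pow_log_le_self p hN
  have h2 := Nat.lt_pow_succ_log_self hp N
  have hpos : 0 < p ^ Nat.log p N := Nat.pow_pos (by omega)
  have hq1 : 1 ≤ N / p ^ Nat.log p N := (Nat.one_le_div_iff hpos).mpr h1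
  have hq2 : N / p ^ Nat.log p N < p := by
    rw [Nat.div_lt_iff_lt_mul hpos]
    calc N < p ^ (Nat.log p N + 1) := h2
      _ = p * p ^ Nat.log p N := by rw [pow_succ]; ring
  rw [Nat.mod_eq_of_lt hq2]
  omega

open Classical in
theorem stmt_2 (n p : ℕ) (hn : 1 < n) (hp : p.Prime) (hodd : p ≠ 2) :
    padicValNat p (Finset.gcd (Finset.Ioo 0 n) (fun k => Nat.choose (2 * n) (2 * k))) =
      if ∃ i j : ℕ, i ≤ j ∧ 2 * n = p ^ i + p ^ j then 1 else 0 := by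
  haveI : Fact p.Prime := ⟨hp⟩
  have hp1 : 1 < p := hp.one_lt
  have hp3 : 3 ≤ p := by have := hp.two_le; omega
  have hpodd : p % 2 = 1 := Nat.odd_iff.mp (hp.odd_of_ne_two hodd)
  have hpow : ∀ t : ℕ, p ^ t % 2 = 1 := fun t => Nat.odd_iff.mp ((Nat.odd_iff.mpr hpodd).pow)
  have hppos : ∀ t : ℕ, 0 < p ^ t := fun t => Nat.pow_pos (n := t) (by omega)
  split_ifs with hform
  · -- form case
    obtain ⟨i, j, hij, hNij⟩ := hform
    have hj1 : 1 ≤ j := by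
      by_contra h
      have hi0 : i = 0 := by omega
      have hj0 : j = 0 := by omega
      rw [hi0, hj0] at hNij
      simp at hNij
      omega
    -- every term is divisible by p
    have hdvd_all : ∀ k ∈ Finset.Ioo 0 n, p ∣ (2 * n).choose (2 * k) := by
      intro k hk
      rw [Finset.mem_Ioo] at hk
      have hkN : 2 * k ≤ 2 * n := by omega
      apply dvd_of_carry hp hkN
      by_contra hnc
      push_neg at hnc
      rcases eq_or_lt_of_le hij with rfl | hij'
      · -- i = j : 2n = 2p^i
        have h1 := hnc i
        have hNmod : (2 * n) % p ^ i = 0 := by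
          rw [hNij]; simp [Nat.add_mod, Nat.mod_self]
        rw [hNmod] at h1
        have hdvd : p ^ i ∣ 2 * k := Nat.dvd_of_mod_eq_zero (Nat.le_zero.mp h1)
        obtain ⟨c, hc⟩ := hdvd
        have hclt : c < 2 := by
          by_contra hcge
          push_neg at hcge
          have : p ^ i * 2 ≤ p ^ i * c := Nat.mul_le_mul_left _ hcge
          omega
        interval_cases c <;> (have := hpow i; omega)
      · -- i < j
        have hNi : (2 * n) % p ^ i = 0 := by
          apply Nat.mod_eq_zero_of_dvd
          rw [hNij]; exact dvd_add dvd_rfl (pow_dvd_pow p hij)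
        have hNj : (2 * n) % p ^ j = p ^ i := by
          rw [hNij, Nat.add_mod_right]
          exact Nat.mod_eq_of_lt (Nat.pow_lt_pow_right hp1 hij')
        have h0 := hnc i
        rw [hNi] at h0
        have hdvd : p ^ i ∣ 2 * k := Nat.dvd_of_mod_eq_zero (Nat.le_zero.mp h0)
        have hj' := hnc j
        rw [hNj] at hj'
        have hdr : p ^ i ∣ 2 * k % p ^ j :=
          (Nat.dvd_mod_iff (pow_dvd_pow p hij'.le)).mpr hdvd
        have hr : 2 * k % p ^ j = 0 ∨ 2 * k % p ^ j = p ^ i := by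
          rcases Nat.lt_or_ge (2 * k % p ^ j) (p ^ i) with h | h
          · exact Or.inl (Nat.eq_zero_of_dvd_of_lt hdr h)
          · exact Or.inr (le_antisymm hj' h)
        have hq : 2 * k / p ^ j < 2 := by
          rw [Nat.div_lt_iff_lt_mul (hppos j)]
          have : p ^ i ≤ p ^ j := Nat.pow_le_pow_right (by omega) hij
          omega
        have hdm : p ^ j * (2 * k / p ^ j) + 2 * k % p ^ j = 2 * k := Nat.div_add_mod _ _
        have hpi := hpow i
        have hpj := hpow j
        have hq2 : 2 * k / p ^ j = 0 ∨ 2 * k / p ^ j = 1 := by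
          set q := 2 * k / p ^ j; clear_value q; omega
        rcases hq2 with h | h <;> rw [h] at hdm <;> rcases hr with hr | hr <;> omega
    -- the special term m0 = p^i + p^(j-1) has valuation exactly 1
    set m0 := p ^ i + p ^ (j - 1) with hm0
    have hpij : p ^ i ≤ p ^ j := Nat.pow_le_pow_right (by omega) hij
    have hpj1 : p ^ (j - 1) < p ^ j := Nat.pow_lt_pow_right hp1 (by omega)
    have hm0N : m0 < 2 * n := by rw [hNij]; omega
    have hm0even : m0 % 2 = 0 := by have := hpow i; have := hpow (j - 1); omega
    have hk0 : 2 * (m0 / 2) = m0 := by omega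
    have hk0mem : m0 / 2 ∈ Finset.Ioo 0 n := by
      rw [Finset.mem_Ioo]
      have h1 : 0 < p ^ i := hppos i
      have h2 : 0 < p ^ (j - 1) := hppos (j - 1)
      omega
    have hsingle : ∀ t, (2 * n) % p ^ t < m0 % p ^ t ↔ t = j := by
      have hNlt : 2 * n < p ^ (j + 1) := by
        have : 2 * p ^ j < p * p ^ j := by
          have := hppos j; have : 0 < p ^ j := this; nlinarith
        rw [hNij, pow_succ]
        nlinarith [hppos j]
      rcases eq_or_lt_of_le hij with rfl | hij'
      · -- i = j
        intro t
        rcases lt_trichotomy t i with ht | rfl | ht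
        · -- t < i : both ≡ 0
          have hd1 : m0 % p ^ t = 0 := Nat.mod_eq_zero_of_dvd
            (dvd_add (pow_dvd_pow p (by omega)) (pow_dvd_pow p (by omega)))
          have hd2 : (2 * n) % p ^ t = 0 := Nat.mod_eq_zero_of_dvd
            (by rw [hNij]; exact dvd_add (pow_dvd_pow p (by omega)) (pow_dvd_pow p (by omega)))
          rw [hd1, hd2]
          omega
        · -- t = i : carry
          have hd2 : (2 * n) % p ^ t = 0 := Nat.mod_eq_zero_of_dvd
            (by rw [hNij]; exact dvd_add dvd_rfl dvd_rfl)
          have hd1 : m0 % p ^ t = p ^ (t - 1) := by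
            rw [hm0, Nat.add_mod_left]
            exact Nat.mod_eq_of_lt hpj1
          rw [hd1, hd2]
          simp [hppos (t - 1)]
        · -- t > i
          have h1 : 2 * n < p ^ t := lt_of_lt_of_le hNlt (Nat.pow_le_pow_right (by omega) (by omega))
          rw [Nat.mod_eq_of_lt h1, Nat.mod_eq_of_lt (by omega : m0 < p ^ t)]
          omega
      · -- i < j
        have hij1 : i ≤ j - 1 := by omega
        have hpij1 : p ^ i ≤ p ^ (j - 1) := Nat.pow_le_pow_right (by omega) hij1
        have hm0lt : m0 < p ^ j := by
          have : p ^ j = p * p ^ (j - 1) := by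
            rw [← _root_.pow_succ']; congr 1; omega
          rw [hm0, this]
          nlinarith [hppos (j - 1)]
        intro t
        rcases Nat.lt_or_ge t (i + 1) with ht | ht
        · -- t ≤ i : both 0
          have hd1 : m0 % p ^ t = 0 := Nat.mod_eq_zero_of_dvd
            (dvd_add (pow_dvd_pow p (by omega)) (pow_dvd_pow p (by omega)))
          have hd2 : (2 * n) % p ^ t = 0 := Nat.mod_eq_zero_of_dvd
            (by rw [hNij]; exact dvd_add (pow_dvd_pow p (by omega)) (pow_dvd_pow p (by omega)))
          rw [hd1, hd2]
          omega
        rcases Nat.lt_or_ge t j with ht2 | ht2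
        · -- i < t ≤ j - 1 : both p ^ i
          have hpit : p ^ i < p ^ t := Nat.pow_lt_pow_right hp1 (by omega)
          have hd1 : m0 % p ^ t = p ^ i := by
            obtain ⟨c, hc⟩ := pow_dvd_pow p (by omega : t ≤ j - 1)
            rw [hm0, hc, Nat.add_mul_mod_self_left]
            exact Nat.mod_eq_of_lt hpit
          have hd2 : (2 * n) % p ^ t = p ^ i := by
            obtain ⟨c, hc⟩ := pow_dvd_pow p (by omega : t ≤ j)
            rw [hNij, hc, Nat.add_mul_mod_self_left]
            exact Nat.mod_eq_of_lt hpit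
          rw [hd1, hd2]
          omega
        rcases eq_or_lt_of_le ht2 with rfl | ht3
        · -- t = j : carry
          have hd2 : (2 * n) % p ^ j = p ^ i := by
            rw [hNij, Nat.add_mod_right]
            exact Nat.mod_eq_of_lt (by omega)
          have hd1 : m0 % p ^ j = m0 := Nat.mod_eq_of_lt hm0lt
          rw [hd1, hd2]
          have h3 := hppos (j - 1)
          have h4 : p ^ i < m0 := by rw [hm0]; omega
          simp [h4]
        · -- t > j
          have h1 : 2 * n < p ^ t := lt_of_lt_of_le hNlt (Nat.pow_le_pow_right (by omega) (by omega))
          rw [Nat.mod_eq_of_lt h1, Nat.mod_eq_of_lt (by omega : m0 < p ^ t)]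
          omega
    have hval1 : padicValNat p ((2 * n).choose m0) = 1 :=
      val_one_of_single_carry hp (le_of_lt hm0N) hsingle
    -- assemble
    have hgcd_dvd : (Finset.Ioo 0 n).gcd (fun k => (2 * n).choose (2 * k)) ∣ (2 * n).choose m0 := by
      have := Finset.gcd_dvd hk0mem (f := fun k => (2 * n).choose (2 * k))
      simpa only [hk0] using this
    have hpdvd : p ∣ (Finset.Ioo 0 n).gcd (fun k => (2 * n).choose (2 * k)) :=
      Finset.dvd_gcd hdvd_all
    have hchoosepos : 0 < (2 * n).choose m0 := Nat.choose_pos (le_of_lt hm0N)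
    have hgcdne : (Finset.Ioo 0 n).gcd (fun k => (2 * n).choose (2 * k)) ≠ 0 := by
      intro h
      rw [h] at hgcd_dvd
      have := Nat.eq_zero_of_zero_dvd hgcd_dvd
      omega
    have hv1 : 1 ≤ padicValNat p ((Finset.Ioo 0 n).gcd fun k => (2 * n).choose (2 * k)) :=
      one_le_padicValNat_of_dvd hgcdne hpdvd
    have hv2 : ¬ 2 ≤ padicValNat p ((Finset.Ioo 0 n).gcd fun k => (2 * n).choose (2 * k)) := by
      intro h2
      have hd2 : p ^ 2 ∣ (Finset.Ioo 0 n).gcd fun k => (2 * n).choose (2 * k) :=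
        (padicValNat_dvd_iff_le hgcdne).mpr h2
      have hd3 : p ^ 2 ∣ (2 * n).choose m0 := hd2.trans hgcd_dvd
      have := (padicValNat_dvd_iff_le hchoosepos.ne').mp hd3
      omega
    omega
  · -- non-form case: find a term not divisible by p
    suffices h : ∃ k ∈ Finset.Ioo 0 n, ¬ p ∣ (2 * n).choose (2 * k) by
      obtain ⟨k, hkmem, hknd⟩ := h
      apply padicValNat.eq_zero_of_not_dvd
      intro hpd
      exact hknd (hpd.trans (Finset.gcd_dvd hkmem))
    have hN4 : 4 ≤ 2 * n := by omega
    by_cases htwo : ∃ t1 t2, t1 < t2 ∧ (2 * n) / p ^ t1 % p ≠ 0 ∧ (2 * n) / p ^ t2 % p ≠ 0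
    · obtain ⟨t1, t2, hlt, h1, h2⟩ := htwo
      have hs : ∀ s, t2 < s → 2 * n < p ^ s → p ^ t1 + p ^ t2 ≤ 2 * n := by
        intro s hs1 hs2
        have := two_digits_le hp1 hlt hs1 h1 h2
        rwa [Nat.mod_eq_of_lt hs2] at this
      have hsbig : p ^ t1 + p ^ t2 ≤ 2 * n := by
        refine hs (2 * n + t2 + 1) (by omega) ?_
        calc 2 * n < 2 ^ (2 * n) := Nat.lt_two_pow_self
          _ ≤ p ^ (2 * n) := Nat.pow_le_pow_left (by omega) _
          _ ≤ p ^ (2 * n + t2 + 1) := Nat.pow_le_pow_right (by omega) (by omega)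
      have hmne : p ^ t1 + p ^ t2 ≠ 2 * n := fun h => hform ⟨t1, t2, hlt.le, h.symm⟩
      have hmeven : (p ^ t1 + p ^ t2) % 2 = 0 := by have := hpow t1; have := hpow t2; omega
      refine ⟨(p ^ t1 + p ^ t2) / 2, ?_, ?_⟩
      · rw [Finset.mem_Ioo]
        have := hppos t1; have := hppos t2
        omega
      · have hk2 : 2 * ((p ^ t1 + p ^ t2) / 2) = p ^ t1 + p ^ t2 := by omega
        rw [hk2]
        apply not_dvd_of_no_carry hp (by omega)
        intro s
        rcases Nat.lt_or_ge t1 s with hs1 | hs1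
        · rcases Nat.lt_or_ge t2 s with hs2 | hs2
          · -- s > t2
            calc (p ^ t1 + p ^ t2) % p ^ s ≤ p ^ t1 + p ^ t2 := Nat.mod_le _ _
              _ ≤ (2 * n) % p ^ s := two_digits_le hp1 hlt hs2 h1 h2
          · -- t1 < s ≤ t2
            have hd : (p ^ t1 + p ^ t2) % p ^ s = p ^ t1 := by
              obtain ⟨c, hc⟩ := pow_dvd_pow p hs2
              rw [hc, Nat.add_mul_mod_self_left]
              exact Nat.mod_eq_of_lt (Nat.pow_lt_pow_right hp1 hs1)
            rw [hd]
            exact le_mod_of_digit_ne hp1 hs1 h1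
        · -- s ≤ t1
          have hd : (p ^ t1 + p ^ t2) % p ^ s = 0 := Nat.mod_eq_zero_of_dvd
            (dvd_add (pow_dvd_pow p hs1) (pow_dvd_pow p (by omega)))
          rw [hd]
          exact Nat.zero_le _
    · -- single digit position: 2n = q * p^t with 3 ≤ q < p
      push_neg at htwo
      set t := Nat.log p (2 * n) with ht
      have hDt : (2 * n) / p ^ t % p ≠ 0 := leading_digit_ne hp1 (by omega)
      have hzero : ∀ u, u ≠ t → (2 * n) / p ^ u % p = 0 := by
        intro u hu
        rcases Nat.lt_or_ge u t with h | h
        · by_contra hc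
          exact hDt (htwo u t h hc)
        · exact htwo t u (by omega) hDt
      have hdvd : p ^ t ∣ 2 * n := pow_dvd_of_digits_zero hp1 t (fun u hu => hzero u (by omega))
      clear_value t
      obtain ⟨q, hqN⟩ := hdvd
      have hdq : 2 * n / p ^ t = q := by rw [hqN]; exact Nat.mul_div_cancel_left q (hppos t)
      have hqp : q < p := by
        by_contra hge
        push_neg at hge
        have hq0 : q ≠ 0 := by intro h; rw [h] at hge; omega
        have hlog1 : 0 < Nat.log p q := Nat.log_pos hp1 hge
        have hu : (2 * n) / p ^ (t + Nat.log p q) % p ≠ 0 := by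
          rw [pow_add, ← Nat.div_div_eq_div_mul, hdq]
          exact leading_digit_ne hp1 hq0
        exact hu (hzero _ (by omega))
      have hq2 : q % p = q := Nat.mod_eq_of_lt hqp
      have hqeven : q % 2 = 0 := by
        have h2d : 2 ∣ p ^ t * q := ⟨n, hqN.symm⟩
        rcases (Nat.Prime.dvd_mul Nat.prime_two).mp h2d with h | h
        · obtain ⟨c, hc⟩ := h
          have := hpow t
          omega
        · obtain ⟨c, hc⟩ := h
          omega
      have hqne2 : q ≠ 2 := by
        intro h
        rw [h] at hqN
        exact hform ⟨t, t, le_rfl, by omega⟩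
      have hq3 : 3 ≤ q := by
        have : q ≠ 0 := by intro h; rw [h, Nat.mul_zero] at hqN; omega
        omega
      have hNlt : 2 * n < p ^ (t + 1) := by
        rw [pow_succ]
        calc 2 * n = p ^ t * q := hqN
          _ < p ^ t * p := (Nat.mul_lt_mul_left (hppos t)).mpr hqp
      refine ⟨p ^ t, ?_, ?_⟩
      · rw [Finset.mem_Ioo]
        have h1 := hppos t
        have h2 : p ^ t * 3 ≤ p ^ t * q := Nat.mul_le_mul_left _ hq3
        omega
      · apply not_dvd_of_no_carry hp (by have h2 : p ^ t * 3 ≤ p ^ t * q := Nat.mul_le_mul_left _ hq3; have := hppos t; omega)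
        intro s
        rcases Nat.lt_or_ge t s with hs | hs
        · have hNs : (2 * n) % p ^ s = 2 * n :=
            Nat.mod_eq_of_lt (lt_of_lt_of_le hNlt (Nat.pow_le_pow_right (by omega) (by omega)))
          rw [hNs]
          calc 2 * p ^ t % p ^ s ≤ 2 * p ^ t := Nat.mod_le _ _
            _ ≤ 2 * n := by
                have : p ^ t * 3 ≤ p ^ t * q := Nat.mul_le_mul_left _ hq3
                omega
        · have hd : 2 * p ^ t % p ^ s = 0 := Nat.mod_eq_zero_of_dvd
            (Dvd.dvd.mul_left (pow_dvd_pow p hs) 2)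
          rw [hd]
          exact Nat.zero_le _
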